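/- Let k ≥ 1 and let ‖·‖_E and ‖·‖_F be two norms on ℝ^k. Let α be a norm on the space of linear endomorphisms of ℝ^k (regarded as operators from (ℝ^k, ‖·‖_E) to (ℝ^k, ‖·‖_F)) satisfying the ideal property α(B ∘ U ∘ A) ≤ ‖B‖_{F→F} · α(U) · ‖A‖_{E→E} for all linear A, B, U, where ‖A‖_{E→E} and ‖B‖_{F→F} are operator norms with respect to ‖·‖_E and ‖·‖_F respectively. Define α*(V) = sup{ trace(V ∘ U)/α(U) : U ≠ 0 } for linear V : ℝ^k → ℝ^k. Let G be a rich compact subgroup of GL_k(ℝ) with normalized Haar measure μ. Then k ≤ α(id) · α*(id) ≤ k · ∫_G ‖g‖_{E→E} · ‖g⁻¹‖_{F→F} dμ(g). In particular, if every g ∈ G is an isometry of (ℝ^k, ‖·‖_F), then k ≤ α(id)·α*(id) ≤ k·∫_G ‖g‖_{E→E} dμ(g). -/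

import Mathlib

open scoped BigOperators

/-- The Euclidean norm on `ℝⁿ`. -/
noncomputable def l2 {n : ℕ} (b : Fin n → ℝ) : ℝ := Real.sqrt (∑ j, b j ^ 2)

/-- The Kalton–Peck map `F(b)_j = b_j log(|b_j|/‖b‖₂)`, with `F(b)_j = 0` when `b_j = 0`. -/
noncomputable def KPF {n : ℕ} (b : Fin n → ℝ) : Fin n → ℝ :=
  fun j => if b j = 0 then 0 else b j * Real.log (|b j| / l2 b)

/-- The Kalton–Peck quasi-norm `‖(a,b)‖ = ‖b‖₂ + ‖a - F(b)‖₂` on `ℝⁿ × ℝⁿ`. -/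
noncomputable def znorm {n : ℕ} (x : (Fin n → ℝ) × (Fin n → ℝ)) : ℝ :=
  l2 x.2 + l2 (x.1 - KPF x.2)

/-- Operator "norm" `sup_{x ≠ 0} N_W(T x) / N_V(x)` of a map `T` between spaces
equipped with (quasi-)norms `N_V`, `N_W`. -/
noncomputable def ratioSup {V W : Type*} [Zero V] (NV : V → ℝ) (NW : W → ℝ) (T : V → W) : ℝ :=
  ⨆ x : {x : V // x ≠ 0}, NW (T x.1) / NV x.1

/-- The product σ-algebra (= Borel σ-algebra) on matrices. -/
instance {k m : ℕ} : MeasurableSpace (Matrix (Fin k) (Fin m) ℝ) := MeasurableSpace.pi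


set_option linter.unusedSectionVars false
set_option maxHeartbeats 1000000



section AuxNorm
variable {E : Type*} [NormedAddCommGroup E] [NormedSpace ℝ E] [FiniteDimensional ℝ E]

theorem auxNsum (N : E → ℝ) (h0 : N 0 = 0) (ht : ∀ x y, N (x + y) ≤ N x + N y)
    {ι : Type*} (s : Finset ι) (f : ι → E) : N (∑ i ∈ s, f i) ≤ ∑ i ∈ s, N (f i) := by
  classical
  induction s using Finset.cons_induction with
  | empty => simpa using h0.le
  | cons i s hi ih =>
      rw [Finset.sum_cons, Finset.sum_cons]
      exact (ht _ _).trans (by linarith)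

theorem auxNonneg (N : E → ℝ) (h0 : N 0 = 0) (hh : ∀ (c : ℝ) (x), N (c • x) = |c| * N x)
    (ht : ∀ x y, N (x + y) ≤ N x + N y) (x : E) : 0 ≤ N x := by
  have h1 : N (-x) = N x := by
    have := hh (-1) x; simp at this; simpa using this
  have h2 := ht x (-x)
  simp [h0] at h2
  linarith

theorem auxUpper (N : E → ℝ) (h0 : N 0 = 0) (hh : ∀ (c : ℝ) (x), N (c • x) = |c| * N x)
    (ht : ∀ x y, N (x + y) ≤ N x + N y) :
    ∃ C : ℝ, 0 < C ∧ ∀ x, N x ≤ C * ‖x‖ := by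
  classical
  set b := Module.finBasis ℝ E with hb
  set L : _ → E →L[ℝ] ℝ := fun i => LinearMap.toContinuousLinearMap (b.coord i) with hL
  have hNb : ∀ i, 0 ≤ N (b i) := fun i => auxNonneg N h0 hh ht _
  have hsum : 0 ≤ ∑ i, ‖L i‖ * N (b i) :=
    Finset.sum_nonneg fun i _ => mul_nonneg (norm_nonneg _) (hNb i)
  refine ⟨∑ i, ‖L i‖ * N (b i) + 1, by linarith, fun x => ?_⟩
  have hx : x = ∑ i, b.repr x i • b i := (b.sum_repr x).symm
  have h1 : N x ≤ ∑ i, N (b.repr x i • b i) := by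
    nth_rewrite 1 [hx]; exact auxNsum N h0 ht _ _
  have h2 : ∀ i, N (b.repr x i • b i) ≤ (‖L i‖ * N (b i)) * ‖x‖ := by
    intro i
    rw [hh]
    have h3 : |b.repr x i| ≤ ‖L i‖ * ‖x‖ := by
      have := (L i).le_opNorm x
      simpa [hL, Real.norm_eq_abs] using this
    nlinarith [hNb i, norm_nonneg x, (L i).opNorm_nonneg]
  calc N x ≤ ∑ i, N (b.repr x i • b i) := h1
    _ ≤ ∑ i, (‖L i‖ * N (b i)) * ‖x‖ := Finset.sum_le_sum fun i _ => h2 i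
    _ = (∑ i, ‖L i‖ * N (b i)) * ‖x‖ := by rw [Finset.sum_mul]
    _ ≤ (∑ i, ‖L i‖ * N (b i) + 1) * ‖x‖ := by
        have := norm_nonneg x; nlinarith

theorem auxCont (N : E → ℝ) (h0 : N 0 = 0) (hh : ∀ (c : ℝ) (x), N (c • x) = |c| * N x)
    (ht : ∀ x y, N (x + y) ≤ N x + N y) : Continuous N := by
  obtain ⟨C, hC, hCb⟩ := auxUpper N h0 hh ht
  have hneg : ∀ x : E, N (-x) = N x := by
    intro x; have := hh (-1) x; simpa using this
  have key : ∀ x y : E, N x - N y ≤ C * ‖x - y‖ := by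
    intro x y
    have h1 : N x ≤ N y + N (x - y) := by
      have := ht y (x - y); simpa using this
    have := hCb (x - y); linarith
  have : LipschitzWith (Real.toNNReal C) N := by
    apply LipschitzWith.of_dist_le_mul
    intro x y
    rw [Real.dist_eq, Real.coe_toNNReal _ hC.le, dist_eq_norm]
    rcases abs_cases (N x - N y) with ⟨h, _⟩ | ⟨h, _⟩
    · rw [h]; exact key x y
    · rw [h]; have := key y x; rw [← norm_neg]; simpa [neg_sub] using this
  exact this.continuous

theorem auxLower [Nontrivial E] (N : E → ℝ) (h00 : ∀ x, N x = 0 ↔ x = 0)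
    (hh : ∀ (c : ℝ) (x), N (c • x) = |c| * N x)
    (ht : ∀ x y, N (x + y) ≤ N x + N y) :
    ∃ c : ℝ, 0 < c ∧ ∀ x, c * ‖x‖ ≤ N x := by
  have h0 : N 0 = 0 := (h00 0).2 rfl
  have hcont := auxCont N h0 hh ht
  obtain ⟨z, hz⟩ : ∃ z : E, ‖z‖ = 1 := exists_norm_eq E zero_le_one
  have hsph : IsCompact (Metric.sphere (0:E) 1) := isCompact_sphere 0 1
  have hzmem : z ∈ Metric.sphere (0:E) 1 := by simp [mem_sphere_iff_norm, hz]
  obtain ⟨w, hw, hmin⟩ := hsph.exists_isMinOn ⟨z, hzmem⟩ hcont.continuousOn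
  have hw1 : ‖w‖ = 1 := by simpa [mem_sphere_iff_norm] using hw
  have hwne : w ≠ 0 := by intro h; rw [h] at hw1; simp at hw1
  have hNw : 0 < N w := by
    rcases lt_or_eq_of_le (auxNonneg N h0 hh ht w) with h | h
    · exact h
    · exact absurd ((h00 w).1 h.symm) hwne
  refine ⟨N w, hNw, fun x => ?_⟩
  rcases eq_or_ne x 0 with rfl | hx
  · simp [h0]
  · have hxn : (0:ℝ) < ‖x‖ := norm_pos_iff.2 hx
    have hu : ‖x‖⁻¹ • x ∈ Metric.sphere (0:E) 1 := by
      simp [mem_sphere_iff_norm, norm_smul, abs_of_pos (inv_pos.2 hxn), inv_mul_cancel₀ hxn.ne']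
    have h1 : N w ≤ N (‖x‖⁻¹ • x) := hmin hu
    rw [hh] at h1
    rw [abs_of_pos (inv_pos.2 hxn)] at h1
    calc N w * ‖x‖ ≤ (‖x‖⁻¹ * N x) * ‖x‖ := by nlinarith
      _ = N x := by field_simp

end AuxNorm

section AuxRatio2

attribute [local instance] Matrix.normedAddCommGroup Matrix.normedSpace
variable {k : ℕ}

theorem auxNontrivial (hk : 0 < k) : Nonempty {x : Fin k → ℝ // x ≠ 0} := by
  refine ⟨⟨fun _ => 1, fun h => ?_⟩⟩
  have := congrFun h ⟨0, hk⟩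
  simp at this

theorem auxKnn (g : Matrix (Fin k) (Fin k) ℝ) : 0 ≤ ∑ i, ∑ j, |g i j| :=
  Finset.sum_nonneg fun i _ => Finset.sum_nonneg fun j _ => abs_nonneg _

theorem mulVec_norm_le (g : Matrix (Fin k) (Fin k) ℝ) (x : Fin k → ℝ) :
    ‖g.mulVec x‖ ≤ (∑ i, ∑ j, |g i j|) * ‖x‖ := by
  rw [pi_norm_le_iff_of_nonneg (mul_nonneg (auxKnn g) (norm_nonneg x))]
  intro i
  calc ‖g.mulVec x i‖ = |∑ j, g i j * x j| := by
        simp [Matrix.mulVec, dotProduct, Real.norm_eq_abs]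
    _ ≤ ∑ j, |g i j * x j| := Finset.abs_sum_le_sum_abs _ _
    _ ≤ ∑ j, |g i j| * ‖x‖ := Finset.sum_le_sum fun j _ => by
        rw [abs_mul]
        exact mul_le_mul_of_nonneg_left (norm_le_pi_norm x j) (abs_nonneg _)
    _ = (∑ j, |g i j|) * ‖x‖ := by rw [Finset.sum_mul]
    _ ≤ (∑ i, ∑ j, |g i j|) * ‖x‖ := by
        have : (∑ j, |g i j|) ≤ ∑ i', ∑ j, |g i' j| :=
          Finset.single_le_sum (f := fun i' => ∑ j, |g i' j|)
            (fun i' _ => Finset.sum_nonneg fun j _ => abs_nonneg _) (Finset.mem_univ i)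
        exact mul_le_mul_of_nonneg_right this (norm_nonneg x)

theorem auxK_le (g : Matrix (Fin k) (Fin k) ℝ) :
    (∑ i, ∑ j, |g i j|) ≤ (k^2 : ℝ) * ‖g‖ := by
  calc (∑ i, ∑ j, |g i j|) ≤ ∑ _i : Fin k, ∑ _j : Fin k, ‖g‖ :=
      Finset.sum_le_sum fun i _ => Finset.sum_le_sum fun j _ =>
        (Real.norm_eq_abs _ ▸ g.norm_entry_le_entrywise_sup_norm)
    _ = (k^2 : ℝ) * ‖g‖ := by simp [Finset.sum_const]; ring

variable (NV NW : (Fin k → ℝ) → ℝ) (cV CW : ℝ)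

theorem ratio_elem_le (hcV : 0 < cV) (hCW : 0 ≤ CW)
    (hV : ∀ x, cV * ‖x‖ ≤ NV x) (hW : ∀ x, NW x ≤ CW * ‖x‖)
    (g : Matrix (Fin k) (Fin k) ℝ) (x : Fin k → ℝ) (hx : x ≠ 0) :
    NW (g.mulVec x) / NV x ≤ CW * (∑ i, ∑ j, |g i j|) / cV := by
  have hxn : (0:ℝ) < ‖x‖ := norm_pos_iff.2 hx
  have hNV : 0 < NV x := lt_of_lt_of_le (by positivity) (hV x)
  rw [div_le_div_iff₀ hNV hcV]
  have h1 : NW (g.mulVec x) ≤ CW * ((∑ i, ∑ j, |g i j|) * ‖x‖) :=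
    le_trans (hW _) (mul_le_mul_of_nonneg_left (mulVec_norm_le g x) hCW)
  have h2 : cV * ‖x‖ ≤ NV x := hV x
  nlinarith [auxKnn g, norm_nonneg x, mul_le_mul_of_nonneg_left h2 (mul_nonneg hCW (auxKnn g))]

theorem ratio_bddAbove (hk : 0 < k) (hcV : 0 < cV) (hCW : 0 ≤ CW)
    (hV : ∀ x, cV * ‖x‖ ≤ NV x) (hW : ∀ x, NW x ≤ CW * ‖x‖)
    (g : Matrix (Fin k) (Fin k) ℝ) :
    BddAbove (Set.range fun x : {x : Fin k → ℝ // x ≠ 0} => NW (g.mulVec x.1) / NV x.1) :=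
  ⟨CW * (∑ i, ∑ j, |g i j|) / cV, by
    rintro r ⟨x, rfl⟩
    exact ratio_elem_le NV NW cV CW hcV hCW hV hW g x.1 x.2⟩

theorem ratio_le (hk : 0 < k) (hcV : 0 < cV) (hCW : 0 ≤ CW)
    (hV : ∀ x, cV * ‖x‖ ≤ NV x) (hW : ∀ x, NW x ≤ CW * ‖x‖)
    (g : Matrix (Fin k) (Fin k) ℝ) :
    ratioSup NV NW (g.mulVec) ≤ CW * (∑ i, ∑ j, |g i j|) / cV := by
  have : Nonempty {x : Fin k → ℝ // x ≠ 0} := auxNontrivial hk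
  exact ciSup_le fun x => ratio_elem_le NV NW cV CW hcV hCW hV hW g x.1 x.2

theorem ratio_nonneg (hk : 0 < k) (hcV : 0 < cV) (hCW : 0 ≤ CW)
    (hV : ∀ x, cV * ‖x‖ ≤ NV x) (hW : ∀ x, NW x ≤ CW * ‖x‖) (hWnn : ∀ x, 0 ≤ NW x)
    (g : Matrix (Fin k) (Fin k) ℝ) :
    0 ≤ ratioSup NV NW (g.mulVec) := by
  have hne : Nonempty {x : Fin k → ℝ // x ≠ 0} := auxNontrivial hk
  obtain ⟨x⟩ := hne
  have h1 : NW (g.mulVec x.1) / NV x.1 ≤ ratioSup NV NW (g.mulVec) :=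
    le_ciSup (ratio_bddAbove NV NW cV CW hk hcV hCW hV hW g) x
  have hNV : 0 < NV x.1 := lt_of_lt_of_le (mul_pos hcV (norm_pos_iff.2 x.2)) (hV x.1)
  exact le_trans (div_nonneg (hWnn _) hNV.le) h1

theorem le_ratio (hk : 0 < k) (hcV : 0 < cV) (hCW : 0 ≤ CW)
    (hV : ∀ x, cV * ‖x‖ ≤ NV x) (hW : ∀ x, NW x ≤ CW * ‖x‖) (hWnn : ∀ x, 0 ≤ NW x)
    (hW0 : NW 0 = 0) (hVnn : ∀ x, 0 ≤ NV x)
    (g : Matrix (Fin k) (Fin k) ℝ) (x : Fin k → ℝ) :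
    NW (g.mulVec x) ≤ ratioSup NV NW (g.mulVec) * NV x := by
  rcases eq_or_ne x 0 with rfl | hx
  · rw [Matrix.mulVec_zero, hW0]
    exact mul_nonneg (ratio_nonneg NV NW cV CW hk hcV hCW hV hW hWnn g) (hVnn 0)
  · have hNV : 0 < NV x := lt_of_lt_of_le (mul_pos hcV (norm_pos_iff.2 hx)) (hV x)
    have h1 : NW (g.mulVec x) / NV x ≤ ratioSup NV NW (g.mulVec) :=
      le_ciSup (ratio_bddAbove NV NW cV CW hk hcV hCW hV hW g) ⟨x, hx⟩
    rw [div_le_iff₀ hNV] at h1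
    linarith [h1]

theorem ratio_continuous (hk : 0 < k) (hcV : 0 < cV) (hCW : 0 ≤ CW)
    (hV : ∀ x, cV * ‖x‖ ≤ NV x) (hW : ∀ x, NW x ≤ CW * ‖x‖) (hWnn : ∀ x, 0 ≤ NW x)
    (hW0 : NW 0 = 0) (hVnn : ∀ x, 0 ≤ NV x)
    (hWt : ∀ x y, NW (x + y) ≤ NW x + NW y) :
    Continuous fun g : Matrix (Fin k) (Fin k) ℝ => ratioSup NV NW (g.mulVec) := by
  have hne : Nonempty {x : Fin k → ℝ // x ≠ 0} := auxNontrivial hk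
  have key : ∀ g g' : Matrix (Fin k) (Fin k) ℝ,
      ratioSup NV NW (g.mulVec) - ratioSup NV NW (g'.mulVec)
        ≤ (CW * (k^2 : ℝ) / cV) * ‖g - g'‖ := by
    intro g g'
    have h1 : ratioSup NV NW (g.mulVec)
        ≤ ratioSup NV NW (g'.mulVec) + CW * (∑ i, ∑ j, |(g - g') i j|) / cV := by
      apply ciSup_le
      rintro ⟨x, hx⟩
      have hNV : 0 < NV x := lt_of_lt_of_le (mul_pos hcV (norm_pos_iff.2 hx)) (hV x)
      rw [div_le_iff₀ hNV]
      have hsplit : g.mulVec x = g'.mulVec x + (g - g').mulVec x := by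
        rw [Matrix.sub_mulVec]; abel
      calc NW (g.mulVec x) ≤ NW (g'.mulVec x) + NW ((g - g').mulVec x) := by
            rw [hsplit]; exact hWt _ _
        _ ≤ ratioSup NV NW (g'.mulVec) * NV x
              + (CW * (∑ i, ∑ j, |(g - g') i j|) / cV) * NV x := by
            have hb1 := le_ratio NV NW cV CW hk hcV hCW hV hW hWnn hW0 hVnn g' x
            refine add_le_add hb1 ?_
            rcases eq_or_ne x 0 with rfl | hx0
            · rw [Matrix.mulVec_zero, hW0]
              have := auxKnn (g := g - g')
              positivity
            · have h3 := ratio_elem_le NV NW cV CW hcV hCW hV hW (g - g') x hx0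
              rw [div_le_div_iff₀ hNV hcV] at h3
              rw [div_mul_eq_mul_div, le_div_iff₀ hcV]
              linarith
        _ = (ratioSup NV NW (g'.mulVec) + CW * (∑ i, ∑ j, |(g - g') i j|) / cV) * NV x := by
            ring
    have h2 : CW * (∑ i, ∑ j, |(g - g') i j|) / cV ≤ (CW * (k^2 : ℝ) / cV) * ‖g - g'‖ := by
      rw [div_mul_eq_mul_div, mul_assoc]
      have hS := auxK_le (g - g')
      have := auxKnn (g := g - g')
      gcongr
    linarith
  have hlip : LipschitzWith (Real.toNNReal (CW * (k^2 : ℝ) / cV))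
      (fun g : Matrix (Fin k) (Fin k) ℝ => ratioSup NV NW (g.mulVec)) := by
    apply LipschitzWith.of_dist_le_mul
    intro g g'
    rw [Real.dist_eq, Real.coe_toNNReal _ (by positivity), dist_eq_norm]
    rcases abs_cases (ratioSup NV NW (g.mulVec) - ratioSup NV NW (g'.mulVec)) with ⟨h, _⟩ | ⟨h, _⟩
    · rw [h]; exact key g g'
    · rw [h]; have := key g' g; rw [norm_sub_rev] at this; linarith
  exact hlip.continuous
end AuxRatio2




section AuxMeasure
open MeasureTheory
attribute [local instance] Matrix.normedAddCommGroup Matrix.normedSpace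
variable {k : ℕ}

instance auxBorel {k m : ℕ} : BorelSpace (Matrix (Fin k) (Fin m) ℝ) := Pi.borelSpace

instance auxSecondCountable {k m : ℕ} : SecondCountableTopology (Matrix (Fin k) (Fin m) ℝ) :=
  inferInstanceAs (SecondCountableTopology (Fin k → Fin m → ℝ))

instance auxPseudoMetrizable {k m : ℕ} :
    TopologicalSpace.PseudoMetrizableSpace (Matrix (Fin k) (Fin m) ℝ) :=
  inferInstanceAs (TopologicalSpace.PseudoMetrizableSpace (Fin k → Fin m → ℝ))

theorem aux_minv : Measurable (fun g : Matrix (Fin k) (Fin k) ℝ => g⁻¹) := by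
  have h1 : (fun g : Matrix (Fin k) (Fin k) ℝ => g⁻¹)
      = fun g => (g.det)⁻¹ • g.adjugate := by
    funext g; rw [Matrix.inv_def, Ring.inverse_eq_inv']
  rw [h1]
  have hdet : Measurable fun g : Matrix (Fin k) (Fin k) ℝ => g.det :=
    (Continuous.matrix_det continuous_id).measurable
  have hadj : Measurable fun g : Matrix (Fin k) (Fin k) ℝ => g.adjugate :=
    (Continuous.matrix_adjugate continuous_id).measurable
  exact hdet.inv.smul hadj

theorem aux_mul_meas : Measurable (fun p : Matrix (Fin k) (Fin k) ℝ × Matrix (Fin k) (Fin k) ℝ => p.1 * p.2) :=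
  continuous_mul.measurable

variable {G : Set (Matrix (Fin k) (Fin k) ℝ)}
    {μ : Measure (Matrix (Fin k) (Fin k) ℝ)}

theorem aux_aeG (hsupp : μ Gᶜ = 0) : ∀ᵐ g ∂μ, g ∈ G := by
  rw [MeasureTheory.ae_iff]
  simpa [Set.compl_def] using hsupp

variable (hGL : ∀ g ∈ G, IsUnit g) (hinv : ∀ g ∈ G, g⁻¹ ∈ G)
    (hprob : IsProbabilityMeasure μ) (hsupp : μ Gᶜ = 0)
    (hHaar : ∀ g ∈ G, Measure.map (fun h => g * h) μ = μ)

include hGL hinv hprob hsupp hHaar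

theorem aux_inv_int (f : Matrix (Fin k) (Fin k) ℝ → ENNReal) (hf : Measurable f) :
    ∫⁻ h, f h ∂μ = ∫⁻ g, f g⁻¹ ∂μ := by
  haveI := hprob
  have haeG := aux_aeG hsupp
  calc ∫⁻ h, f h ∂μ = ∫⁻ _g, (∫⁻ h, f h ∂μ) ∂μ := by
        rw [lintegral_const, measure_univ, mul_one]
    _ = ∫⁻ g, ∫⁻ h, f (g⁻¹ * h) ∂μ ∂μ := by
        refine lintegral_congr_ae ?_
        filter_upwards [haeG] with g hg
        have hml : Measurable fun h : Matrix (Fin k) (Fin k) ℝ => g⁻¹ * h :=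
          (continuous_const.mul continuous_id).measurable
        conv_lhs => rw [← hHaar g⁻¹ (hinv g hg)]
        rw [lintegral_map hf hml]
    _ = ∫⁻ h, ∫⁻ g, f (g⁻¹ * h) ∂μ ∂μ := by
        apply lintegral_lintegral_swap
        exact (hf.comp ((aux_minv.comp measurable_fst).mul measurable_snd)).aemeasurable
    _ = ∫⁻ _h, (∫⁻ g, f g⁻¹ ∂μ) ∂μ := by
        refine lintegral_congr_ae ?_
        filter_upwards [haeG] with h hh
        have hml : Measurable fun g : Matrix (Fin k) (Fin k) ℝ => h * g :=
          (continuous_const.mul continuous_id).measurable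
        have hF : Measurable fun g : Matrix (Fin k) (Fin k) ℝ => f (g⁻¹ * h) :=
          hf.comp (aux_minv.mul measurable_const)
        have step1 : ∫⁻ g, f (g⁻¹ * h) ∂μ = ∫⁻ g, f ((h * g)⁻¹ * h) ∂μ := by
          conv_lhs => rw [← hHaar h hh]
          rw [lintegral_map hF hml]
        rw [step1]
        refine lintegral_congr_ae ?_
        filter_upwards [haeG] with g hg
        have hhu : IsUnit h.det := (Matrix.isUnit_iff_isUnit_det h).1 (hGL h hh)
        rw [Matrix.mul_inv_rev, mul_assoc, Matrix.nonsing_inv_mul h hhu, mul_one]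
    _ = ∫⁻ g, f g⁻¹ ∂μ := by rw [lintegral_const, measure_univ, mul_one]

theorem aux_inv_map : Measure.map (fun g : Matrix (Fin k) (Fin k) ℝ => g⁻¹) μ = μ := by
  refine Measure.ext fun s hs => ?_
  rw [Measure.map_apply aux_minv hs]
  have h1 := aux_inv_int hGL hinv hprob hsupp hHaar
    (s.indicator (1 : Matrix (Fin k) (Fin k) ℝ → ENNReal))
    (measurable_one.indicator hs)
  rw [lintegral_indicator_one hs] at h1
  have h2 : (fun g : Matrix (Fin k) (Fin k) ℝ => s.indicator (1 : Matrix (Fin k) (Fin k) ℝ → ENNReal) g⁻¹)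
      = ((fun g : Matrix (Fin k) (Fin k) ℝ => g⁻¹) ⁻¹' s).indicator 1 := by
    funext g
    by_cases hgs : g⁻¹ ∈ s <;> simp [Set.indicator, hgs]
  rw [h2, lintegral_indicator_one (aux_minv hs)] at h1
  exact h1.symm

theorem aux_right_inv (g0 : Matrix (Fin k) (Fin k) ℝ) (hg0 : g0 ∈ G) :
    Measure.map (fun h => h * g0) μ = μ := by
  have haeG := aux_aeG hsupp
  have hg0u : IsUnit g0.det := (Matrix.isUnit_iff_isUnit_det g0).1 (hGL g0 hg0)
  have hmulr : Measurable fun h : Matrix (Fin k) (Fin k) ℝ => h * g0 :=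
    (continuous_id.mul continuous_const).measurable
  have hmull : Measurable fun h : Matrix (Fin k) (Fin k) ℝ => g0⁻¹ * h :=
    (continuous_const.mul continuous_id).measurable
  have h1 : Measure.map (fun h => h * g0) μ
      = Measure.map (fun h : Matrix (Fin k) (Fin k) ℝ => h⁻¹ * g0) μ := by
    conv_lhs => rw [← aux_inv_map hGL hinv hprob hsupp hHaar]
    rw [Measure.map_map hmulr aux_minv]
    rfl
  rw [h1]
  have h2 : (fun h : Matrix (Fin k) (Fin k) ℝ => h⁻¹ * g0)
      =ᵐ[μ] (fun h : Matrix (Fin k) (Fin k) ℝ => (g0⁻¹ * h)⁻¹) := by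
    filter_upwards [haeG] with h hh
    rw [Matrix.mul_inv_rev, Matrix.nonsing_inv_nonsing_inv g0 hg0u]
  rw [Measure.map_congr h2]
  have h3 : (fun h : Matrix (Fin k) (Fin k) ℝ => (g0⁻¹ * h)⁻¹)
      = (fun g : Matrix (Fin k) (Fin k) ℝ => g⁻¹) ∘ (fun h => g0⁻¹ * h) := rfl
  rw [h3, ← Measure.map_map aux_minv hmull,
    hHaar g0⁻¹ (hinv g0 hg0), aux_inv_map hGL hinv hprob hsupp hHaar]

end AuxMeasure

attribute [local instance] Matrix.normedAddCommGroup Matrix.normedSpace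

instance auxCENorm {k m : ℕ} : ContinuousENorm (Matrix (Fin k) (Fin m) ℝ) :=
  SeminormedAddGroup.toContinuousENorm

open MeasureTheory in
/-- Trace-duality lemma for ideal norms: if `α` is an ideal norm on operators from
`E = (ℝ^k, NE)` to `F = (ℝ^k, NF)`, with conjugate ideal norm `α*`, and `G` is a rich compact
subgroup of `GL_k(ℝ)` with normalized Haar measure `μ`, then
`k ≤ α(id)·α*(id) ≤ k·∫_G ‖g‖_{E→E}·‖g⁻¹‖_{F→F} dμ(g)`; in particular if every `g ∈ G` is an
isometry of `F` then `k ≤ α(id)·α*(id) ≤ k·∫_G ‖g‖_{E→E} dμ(g)`. -/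
theorem ideal_norm_trace_duality (k : ℕ) (hk : 1 ≤ k)
    (NE NF : (Fin k → ℝ) → ℝ)
    -- `NE` is a norm:
    (hE0 : ∀ x, NE x = 0 ↔ x = 0) (hEh : ∀ (c : ℝ) (x), NE (c • x) = |c| * NE x)
    (hEt : ∀ x y, NE (x + y) ≤ NE x + NE y)
    -- `NF` is a norm:
    (hF0 : ∀ x, NF x = 0 ↔ x = 0) (hFh : ∀ (c : ℝ) (x), NF (c • x) = |c| * NF x)
    (hFt : ∀ x y, NF (x + y) ≤ NF x + NF y)
    (a : Matrix (Fin k) (Fin k) ℝ → ℝ)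
    -- `α` is a norm on the space of linear endomorphisms of `ℝ^k`:
    (ha0 : ∀ U, a U = 0 ↔ U = 0) (hah : ∀ (c : ℝ) (U), a (c • U) = |c| * a U)
    (hat : ∀ U V, a (U + V) ≤ a U + a V)
    -- the ideal property `α(B∘U∘A) ≤ ‖B‖_{F→F}·α(U)·‖A‖_{E→E}`:
    (hIdeal : ∀ A B U : Matrix (Fin k) (Fin k) ℝ,
      a (B * U * A) ≤
        ratioSup NF NF (Matrix.mulVec B) * a U * ratioSup NE NE (Matrix.mulVec A))
    (G : Set (Matrix (Fin k) (Fin k) ℝ))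
    -- `G` is a compact subgroup of `GL_k(ℝ)`:
    (hGL : ∀ g ∈ G, IsUnit g)
    (hone : (1 : Matrix (Fin k) (Fin k) ℝ) ∈ G)
    (hmul : ∀ g ∈ G, ∀ h ∈ G, g * h ∈ G)
    (hinv : ∀ g ∈ G, g⁻¹ ∈ G)
    (hcpt : IsCompact G)
    -- `G` is rich:
    (hrich : ∀ S : Matrix (Fin k) (Fin k) ℝ, (∀ g ∈ G, S * g = g * S) →
      ∃ r : ℝ, S = r • (1 : Matrix (Fin k) (Fin k) ℝ))
    -- `μ` is the normalized Haar probability measure of `G`: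
    (μ : Measure (Matrix (Fin k) (Fin k) ℝ))
    (hprob : IsProbabilityMeasure μ) (hsupp : μ Gᶜ = 0)
    (hHaar : ∀ g ∈ G, Measure.map (fun h => g * h) μ = μ) :
    ((k : ℝ) ≤
      a 1 * (⨆ U : {U : Matrix (Fin k) (Fin k) ℝ // U ≠ 0},
        Matrix.trace ((1 : Matrix (Fin k) (Fin k) ℝ) * U.1) / a U.1) ∧
    a 1 * (⨆ U : {U : Matrix (Fin k) (Fin k) ℝ // U ≠ 0},
        Matrix.trace ((1 : Matrix (Fin k) (Fin k) ℝ) * U.1) / a U.1) ≤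
      (k : ℝ) * ∫ g, ratioSup NE NE (Matrix.mulVec g) *
        ratioSup NF NF (Matrix.mulVec g⁻¹) ∂μ) ∧
    ((∀ g ∈ G, ∀ x, NF (Matrix.mulVec g x) = NF x) →
      a 1 * (⨆ U : {U : Matrix (Fin k) (Fin k) ℝ // U ≠ 0},
        Matrix.trace ((1 : Matrix (Fin k) (Fin k) ℝ) * U.1) / a U.1) ≤
      (k : ℝ) * ∫ g, ratioSup NE NE (Matrix.mulVec g) ∂μ) := by
  classical
  have hk0 : 0 < k := hk
  have hkR : (0:ℝ) < k := Nat.cast_pos.2 hk0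
  haveI hneV : Nonempty {x : Fin k → ℝ // x ≠ 0} := auxNontrivial hk0
  haveI : Nontrivial (Fin k → ℝ) := by
    obtain ⟨x0⟩ := hneV
    exact ⟨x0.1, 0, x0.2⟩
  haveI : Nontrivial (Matrix (Fin k) (Fin k) ℝ) := by
    refine ⟨(fun _ _ => 1), 0, fun h => ?_⟩
    have := congrFun (congrFun h ⟨0, hk0⟩) ⟨0, hk0⟩
    simp at this
  have h1ne : (1 : Matrix (Fin k) (Fin k) ℝ) ≠ 0 := one_ne_zero
  -- norm axioms in usable form
  have hE00 : NE 0 = 0 := (hE0 0).2 rfl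
  have hF00 : NF 0 = 0 := (hF0 0).2 rfl
  have ha00 : a 0 = 0 := (ha0 0).2 rfl
  have hENN : ∀ x, 0 ≤ NE x := auxNonneg NE hE00 hEh hEt
  have hFNN : ∀ x, 0 ≤ NF x := auxNonneg NF hF00 hFh hFt
  have haNN : ∀ U, 0 ≤ a U := auxNonneg a ha00 hah hat
  obtain ⟨CE, hCE, hCEb⟩ := auxUpper NE hE00 hEh hEt
  obtain ⟨cE, hcE, hcEb⟩ := auxLower NE hE0 hEh hEt
  obtain ⟨CF, hCF, hCFb⟩ := auxUpper NF hF00 hFh hFt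
  obtain ⟨cF, hcF, hcFb⟩ := auxLower NF hF0 hFh hFt
  obtain ⟨Ca, hCa, hCab⟩ := auxUpper a ha00 hah hat
  obtain ⟨ca, hca, hcab⟩ := auxLower a ha0 hah hat
  have haPos : ∀ U : Matrix (Fin k) (Fin k) ℝ, U ≠ 0 → 0 < a U := by
    intro U hU
    rcases lt_or_eq_of_le (haNN U) with h | h
    · exact h
    · exact absurd ((ha0 U).1 h.symm) hU
  have ha1 : 0 < a 1 := haPos 1 h1ne
  -- trace bound
  have htrace_le : ∀ U : Matrix (Fin k) (Fin k) ℝ, Matrix.trace U ≤ (k : ℝ) * ‖U‖ := by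
    intro U
    calc Matrix.trace U = ∑ i, U i i := rfl
      _ ≤ ∑ i, |U i i| := Finset.sum_le_sum fun i _ => le_abs_self _
      _ ≤ ∑ _i : Fin k, ‖U‖ := Finset.sum_le_sum fun i _ =>
          (Real.norm_eq_abs _ ▸ U.norm_entry_le_entrywise_sup_norm)
      _ = (k : ℝ) * ‖U‖ := by simp [Finset.sum_const, mul_comm]
  have hBdd : BddAbove (Set.range fun U : {U : Matrix (Fin k) (Fin k) ℝ // U ≠ 0} =>
      Matrix.trace ((1 : Matrix (Fin k) (Fin k) ℝ) * U.1) / a U.1) := by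
    refine ⟨(k : ℝ) / ca, ?_⟩
    rintro r ⟨U, rfl⟩
    show Matrix.trace ((1 : Matrix (Fin k) (Fin k) ℝ) * U.1) / a U.1 ≤ (k : ℝ) / ca
    rw [one_mul, div_le_div_iff₀ (haPos U.1 U.2) hca]
    have h1 := htrace_le U.1
    have h2 := hcab U.1
    nlinarith [norm_nonneg U.1]
  set β := ⨆ U : {U : Matrix (Fin k) (Fin k) ℝ // U ≠ 0},
      Matrix.trace ((1 : Matrix (Fin k) (Fin k) ℝ) * U.1) / a U.1 with hβ
  -- Part 1
  have part1 : (k : ℝ) ≤ a 1 * β := by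
    have h1 : Matrix.trace ((1 : Matrix (Fin k) (Fin k) ℝ) * (1 : Matrix (Fin k) (Fin k) ℝ))
        / a 1 ≤ β := le_ciSup hBdd ⟨1, h1ne⟩
    have h2 : Matrix.trace ((1 : Matrix (Fin k) (Fin k) ℝ) * 1) = (k : ℝ) := by
      rw [one_mul, Matrix.trace_one]; simp
    rw [h2, div_le_iff₀ ha1] at h1
    linarith [h1]
  -- continuity and bounds for the ratio functions
  have hrEcont : Continuous fun g : Matrix (Fin k) (Fin k) ℝ => ratioSup NE NE (g.mulVec) :=
    ratio_continuous NE NE cE CE hk0 hcE hCE.le hcEb hCEb hENN hE00 hENN hEt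
  have hrFcont : Continuous fun g : Matrix (Fin k) (Fin k) ℝ => ratioSup NF NF (g.mulVec) :=
    ratio_continuous NF NF cF CF hk0 hcF hCF.le hcFb hCFb hFNN hF00 hFNN hFt
  have hrE_le : ∀ g : Matrix (Fin k) (Fin k) ℝ,
      ratioSup NE NE (g.mulVec) ≤ (CE * (k^2 : ℝ) / cE) * ‖g‖ := by
    intro g
    refine (ratio_le NE NE cE CE hk0 hcE hCE.le hcEb hCEb g).trans ?_
    rw [div_mul_eq_mul_div, mul_assoc]
    have := auxK_le g
    gcongr
  have hrF_le : ∀ g : Matrix (Fin k) (Fin k) ℝ,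
      ratioSup NF NF (g.mulVec) ≤ (CF * (k^2 : ℝ) / cF) * ‖g‖ := by
    intro g
    refine (ratio_le NF NF cF CF hk0 hcF hCF.le hcFb hCFb g).trans ?_
    rw [div_mul_eq_mul_div, mul_assoc]
    have := auxK_le g
    gcongr
  have hrENN : ∀ g : Matrix (Fin k) (Fin k) ℝ, 0 ≤ ratioSup NE NE (g.mulVec) :=
    fun g => ratio_nonneg NE NE cE CE hk0 hcE hCE.le hcEb hCEb hENN g
  have hrFNN : ∀ g : Matrix (Fin k) (Fin k) ℝ, 0 ≤ ratioSup NF NF (g.mulVec) :=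
    fun g => ratio_nonneg NF NF cF CF hk0 hcF hCF.le hcFb hCFb hFNN g
  -- compactness bounds on G
  have haeG : ∀ᵐ g ∂μ, g ∈ G := aux_aeG hsupp
  have hinvCont : ContinuousOn (fun g : Matrix (Fin k) (Fin k) ℝ => g⁻¹) G := by
    have h1 : (fun g : Matrix (Fin k) (Fin k) ℝ => g⁻¹)
        = fun g => (g.det)⁻¹ • g.adjugate := by
      funext g; rw [Matrix.inv_def, Ring.inverse_eq_inv']
    rw [h1]
    refine ContinuousOn.smul (ContinuousOn.inv₀
      (Continuous.matrix_det continuous_id).continuousOn fun g hg => ?_)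
      (Continuous.matrix_adjugate continuous_id).continuousOn
    exact ((Matrix.isUnit_iff_isUnit_det g).1 (hGL g hg)).ne_zero
  obtain ⟨R1, hR1⟩ := hcpt.exists_bound_of_continuousOn
    (continuousOn_id (s := G))
  obtain ⟨R2, hR2⟩ := hcpt.exists_bound_of_continuousOn hinvCont
  -- the weight function and its integrability
  set w : Matrix (Fin k) (Fin k) ℝ → ℝ :=
    fun g => ratioSup NE NE (g.mulVec) * ratioSup NF NF ((g⁻¹).mulVec) with hw
  have hwNN : ∀ g, 0 ≤ w g := fun g => mul_nonneg (hrENN g) (hrFNN g⁻¹)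
  have hwMeas : Measurable w :=
    (hrEcont.measurable).mul ((hrFcont.measurable).comp aux_minv)
  have hwInt : Integrable w μ := by
    refine Integrable.mono' (integrable_const
      ((CE * (k^2 : ℝ) / cE) * R1 * ((CF * (k^2 : ℝ) / cF) * R2)))
      hwMeas.aestronglyMeasurable ?_
    filter_upwards [haeG] with g hg
    rw [Real.norm_eq_abs, abs_of_nonneg (hwNN g)]
    have h1 : ratioSup NE NE (g.mulVec) ≤ (CE * (k^2 : ℝ) / cE) * R1 := by
      refine (hrE_le g).trans ?_
      have := hR1 g hg
      have hD : (0:ℝ) ≤ CE * (k^2 : ℝ) / cE := by positivity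
      simp only [id_eq] at this
      nlinarith
    have h2 : ratioSup NF NF ((g⁻¹).mulVec) ≤ (CF * (k^2 : ℝ) / cF) * R2 := by
      refine (hrF_le g⁻¹).trans ?_
      have := hR2 g hg
      have hD : (0:ℝ) ≤ CF * (k^2 : ℝ) / cF := by positivity
      nlinarith
    have h0R1 : 0 ≤ R1 := le_trans (norm_nonneg _) (hR1 1 hone)
    exact mul_le_mul h1 h2 (hrFNN g⁻¹) (mul_nonneg (by positivity) h0R1)
  set I := ∫ g, w g ∂μ with hI
  have hINN : 0 ≤ I := integral_nonneg hwNN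
  -- key estimate for each U
  have key : ∀ U : Matrix (Fin k) (Fin k) ℝ, U ≠ 0 →
      Matrix.trace ((1 : Matrix (Fin k) (Fin k) ℝ) * U) / a U ≤ (k : ℝ) * I / a 1 := by
    intro U hU
    set f : Matrix (Fin k) (Fin k) ℝ → Matrix (Fin k) (Fin k) ℝ :=
      fun g => g⁻¹ * U * g with hf
    have hfm : Measurable f := (aux_minv.mul measurable_const).mul measurable_id
    have hfc : ContinuousOn f G :=
      (hinvCont.mul continuousOn_const).mul (continuousOn_id (s := G))
    obtain ⟨Rf, hRf⟩ := hcpt.exists_bound_of_continuousOn hfc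
    have hfInt : Integrable f μ := by
      refine Integrable.mono' (integrable_const Rf) hfm.aestronglyMeasurable ?_
      filter_upwards [haeG] with g hg
      exact hRf g hg
    set P := ∫ g, f g ∂μ with hP
    -- trace of P
    have htrP : Matrix.trace P = Matrix.trace U := by
      have hCLM := (LinearMap.toContinuousLinearMap
        (Matrix.traceLinearMap (Fin k) ℝ ℝ)).integral_comp_comm hfInt
      change ∫ x, Matrix.trace (f x) ∂μ = Matrix.trace (∫ x, f x ∂μ) at hCLM
      rw [hP, ← hCLM]
      have : ∫ g, Matrix.trace (f g) ∂μ = ∫ _g, Matrix.trace U ∂μ := by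
        refine integral_congr_ae ?_
        filter_upwards [haeG] with g hg
        have hu : IsUnit g.det := (Matrix.isUnit_iff_isUnit_det g).1 (hGL g hg)
        rw [hf]
        show Matrix.trace (g⁻¹ * U * g) = Matrix.trace U
        rw [mul_assoc, Matrix.trace_mul_comm, mul_assoc, Matrix.mul_nonsing_inv g hu,
          mul_one]
      rw [this, integral_const, probReal_univ]
      simp
    -- P commutes with G
    have hcomm : ∀ g0 ∈ G, P * g0 = g0 * P := by
      intro g0 hg0
      have hu0 : IsUnit g0.det := (Matrix.isUnit_iff_isUnit_det g0).1 (hGL g0 hg0)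
      set L : Matrix (Fin k) (Fin k) ℝ →ₗ[ℝ] Matrix (Fin k) (Fin k) ℝ :=
        { toFun := fun X => g0⁻¹ * X * g0
          map_add' := fun X Y => by
            show g0⁻¹ * (X + Y) * g0 = g0⁻¹ * X * g0 + g0⁻¹ * Y * g0
            rw [mul_add, add_mul]
          map_smul' := fun c X => by
            simp [Matrix.mul_smul, Matrix.smul_mul] } with hL
      have h1 : g0⁻¹ * P * g0 = ∫ g, g0⁻¹ * f g * g0 ∂μ := by
        have := (LinearMap.toContinuousLinearMap L).integral_comp_comm hfInt
        change ∫ x, g0⁻¹ * f x * g0 ∂μ = g0⁻¹ * (∫ x, f x ∂μ) * g0 at this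
        rw [hP]
        exact this.symm
      have h2 : (fun g => g0⁻¹ * f g * g0) =ᵐ[μ] (fun g => f (g * g0)) := by
        filter_upwards [haeG] with g hg
        rw [hf]
        show g0⁻¹ * (g⁻¹ * U * g) * g0 = (g * g0)⁻¹ * U * (g * g0)
        rw [Matrix.mul_inv_rev]
        noncomm_ring
      have hmulr : Measurable fun h : Matrix (Fin k) (Fin k) ℝ => h * g0 :=
        (continuous_id.mul continuous_const).measurable
      have h3 : ∫ g, f (g * g0) ∂μ = P := by
        have hsm : AEStronglyMeasurable f
            (Measure.map (fun h : Matrix (Fin k) (Fin k) ℝ => h * g0) μ) := by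
          rw [aux_right_inv hGL hinv hprob hsupp hHaar g0 hg0]
          exact hfm.aestronglyMeasurable
        have := integral_map (φ := fun h : Matrix (Fin k) (Fin k) ℝ => h * g0)
          hmulr.aemeasurable hsm
        rw [aux_right_inv hGL hinv hprob hsupp hHaar g0 hg0] at this
        rw [← this, hP]
      have h4 : g0⁻¹ * P * g0 = P := by
        rw [h1, integral_congr_ae h2, h3]
      calc P * g0 = (g0 * g0⁻¹) * P * g0 := by
            rw [Matrix.mul_nonsing_inv g0 hu0, one_mul]
        _ = g0 * (g0⁻¹ * P * g0) := by noncomm_ring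
        _ = g0 * P := by rw [h4]
    obtain ⟨r, hr⟩ := hrich P hcomm
    have hrval : r = Matrix.trace U / k := by
      have h5 : Matrix.trace P = r * k := by
        rw [hr, Matrix.trace_smul, Matrix.trace_one, smul_eq_mul]
        simp
      rw [htrP] at h5
      field_simp [h5]
      linarith
    -- Jensen
    have hconv : ConvexOn ℝ Set.univ a := by
      refine ⟨convex_univ, fun x _ y _ s t hs ht hst => ?_⟩
      calc a (s • x + t • y) ≤ a (s • x) + a (t • y) := hat _ _
        _ = s * a x + t * a y := by
            rw [hah, hah, abs_of_nonneg hs, abs_of_nonneg ht]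
        _ = s • a x + t • a y := by simp [smul_eq_mul]
    have hacont : Continuous a := auxCont a ha00 hah hat
    have hafInt : Integrable (a ∘ f) μ := by
      refine Integrable.mono' (integrable_const (Ca * Rf))
        ((hacont.measurable.comp hfm).aestronglyMeasurable) ?_
      filter_upwards [haeG] with g hg
      rw [Function.comp_apply, Real.norm_eq_abs, abs_of_nonneg (haNN _)]
      have h6 := hCab (f g)
      have h7 := hRf g hg
      nlinarith [norm_nonneg (f g)]
    have hJ : a P ≤ ∫ g, a (f g) ∂μ := by
      have := hconv.map_average_le hacont.continuousOn isClosed_univ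
        (Filter.Eventually.of_forall fun g => Set.mem_univ (f g)) hfInt hafInt
      rwa [average_eq_integral, average_eq_integral] at this
    -- pointwise ideal bound
    have hpt : ∀ g, a (f g) ≤ a U * w g := by
      intro g
      have := hIdeal g g⁻¹ U
      rw [hw]
      show a (g⁻¹ * U * g) ≤ a U * (ratioSup NE NE (g.mulVec) * ratioSup NF NF ((g⁻¹).mulVec))
      calc a (g⁻¹ * U * g)
          ≤ ratioSup NF NF ((g⁻¹).mulVec) * a U * ratioSup NE NE (g.mulVec) := this
        _ = a U * (ratioSup NE NE (g.mulVec) * ratioSup NF NF ((g⁻¹).mulVec)) := by ring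
    have hint2 : ∫ g, a (f g) ∂μ ≤ a U * I := by
      have h8 : ∫ g, a U * w g ∂μ = a U * I := by
        rw [hI]; exact integral_const_mul (a U) w
      rw [← h8]
      exact integral_mono hafInt (hwInt.const_mul (a U)) hpt
    -- combine
    have haP : (Matrix.trace U / k) * a 1 ≤ a U * I := by
      have h9 : a P = |r| * a 1 := by rw [hr, hah]
      have h10 : r * a 1 ≤ a P := by
        rw [h9]
        have := le_abs_self r
        nlinarith
      rw [hrval] at h10
      linarith [hJ.trans hint2]
    rw [one_mul, div_le_div_iff₀ (haPos U hU) ha1]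
    have hk' : (0:ℝ) < (k:ℝ) := hkR
    calc Matrix.trace U * a 1 = (Matrix.trace U / k * a 1) * k := by field_simp
      _ ≤ (a U * I) * k := by nlinarith
      _ = (k:ℝ) * I * a U := by ring
  -- Part 2
  have part2 : a 1 * β ≤ (k : ℝ) * I := by
    haveI : Nonempty {U : Matrix (Fin k) (Fin k) ℝ // U ≠ 0} := ⟨⟨1, h1ne⟩⟩
    have hble : β ≤ (k : ℝ) * I / a 1 := ciSup_le fun U => key U.1 U.2
    calc a 1 * β ≤ a 1 * ((k : ℝ) * I / a 1) := by nlinarith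
      _ = (k : ℝ) * I := by field_simp
  refine ⟨⟨part1, part2⟩, ?_⟩
  -- Part 3
  intro hiso
  have hwa : w =ᵐ[μ] fun g => ratioSup NE NE (g.mulVec) := by
    filter_upwards [haeG] with g hg
    have hone' : ratioSup NF NF ((g⁻¹).mulVec) = 1 := by
      have hfun : (fun x : {x : Fin k → ℝ // x ≠ 0} =>
          NF ((g⁻¹).mulVec x.1) / NF x.1) = fun _ => (1:ℝ) := by
        funext x
        have hNFx : NF x.1 ≠ 0 := fun h => x.2 ((hF0 x.1).1 h)
        rw [hiso g⁻¹ (hinv g hg) x.1, div_self hNFx]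
      rw [ratioSup, hfun, ciSup_const]
    rw [hw]
    show ratioSup NE NE (g.mulVec) * ratioSup NF NF ((g⁻¹).mulVec)
        = ratioSup NE NE (g.mulVec)
    rw [hone', mul_one]
  calc a 1 * β ≤ (k : ℝ) * I := part2
    _ = (k : ℝ) * ∫ g, ratioSup NE NE (g.mulVec) ∂μ := by
        rw [hI, integral_congr_ae hwa]
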